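/- Let n, r be positive integers with n > 2r, let 0 ≤ α < 1, and suppose there exist n unit vectors in ℝ^r with all pairwise inner products at most α. Then n − 2r ≤ (27/8)((1 + αn)³ − 1); in particular, n ≤ 2r + (27/8)((1 + αn)³ − 1). -/

import Mathlib

set_option maxHeartbeats 1000000
open Finset

lemma dcs {m : ℕ} (f g : Fin m → Fin m → ℝ) :
    (∑ i, ∑ j, f i j * g i j)^2 ≤ (∑ i, ∑ j, (f i j)^2) * (∑ i, ∑ j, (g i j)^2) := by
  have h := Finset.sum_mul_sq_le_sq_mul_sq Finset.univ
    (fun p : Fin m × Fin m => f p.1 p.2) (fun p => g p.1 p.2)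
  simpa [Fintype.sum_prod_type] using h

lemma pm_decomp (a : ℝ) : max a 0 - max (-a) 0 = a := by
  rcases le_total a 0 with h | h
  · simp [max_eq_right h, max_eq_left (neg_nonneg.mpr h)]
  · simp [max_eq_left h, max_eq_right (neg_nonpos.mpr h)]

lemma sum4_swap {β γ : Type*} [Fintype β] [Fintype γ] (F : β → β → γ → γ → ℝ) :
    ∑ a, ∑ b, ∑ i, ∑ j, F a b i j = ∑ i, ∑ j, ∑ a, ∑ b, F a b i j := by
  calc ∑ a, ∑ b, ∑ i, ∑ j, F a b i j
      = ∑ a, ∑ i, ∑ b, ∑ j, F a b i j := Finset.sum_congr rfl fun a _ => Finset.sum_comm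
    _ = ∑ i, ∑ a, ∑ b, ∑ j, F a b i j := Finset.sum_comm
    _ = ∑ i, ∑ a, ∑ j, ∑ b, F a b i j :=
        Finset.sum_congr rfl fun i _ => Finset.sum_congr rfl fun a _ => Finset.sum_comm
    _ = ∑ i, ∑ j, ∑ a, ∑ b, F a b i j := Finset.sum_congr rfl fun i _ => Finset.sum_comm

lemma cube_bound (a b c : ℝ) :
    a * b * c ≤ max a 0 * max b 0 * max c 0 + max a 0 * max (-b) 0 * max (-c) 0
      + max (-a) 0 * max b 0 * max (-c) 0 + max (-a) 0 * max (-b) 0 * max c 0 := by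
  have key : ∀ p1 m1 p2 m2 p3 m3 : ℝ, 0 ≤ p1 → 0 ≤ m1 → 0 ≤ p2 → 0 ≤ m2 → 0 ≤ p3 → 0 ≤ m3 →
      (p1 - m1) * (p2 - m2) * (p3 - m3) ≤ p1*p2*p3 + p1*m2*m3 + m1*p2*m3 + m1*m2*p3 := by
    intro p1 m1 p2 m2 p3 m3 h1 h2 h3 h4 h5 h6
    nlinarith [mul_nonneg (mul_nonneg h1 h3) h6, mul_nonneg (mul_nonneg h1 h4) h5,
      mul_nonneg (mul_nonneg h2 h3) h5, mul_nonneg (mul_nonneg h2 h4) h6]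
  have := key (max a 0) (max (-a) 0) (max b 0) (max (-b) 0) (max c 0) (max (-c) 0)
    (le_max_right _ _) (le_max_right _ _) (le_max_right _ _) (le_max_right _ _)
    (le_max_right _ _) (le_max_right _ _)
  rwa [pm_decomp, pm_decomp, pm_decomp] at this

lemma spherical_abstract_main (n r : ℕ) (hr : 0 < r) (hn : 2 * r < n)
    (α : ℝ) (hα0 : 0 ≤ α)
    (g : Fin n → Fin n → ℝ)
    (hsymm : ∀ i j, g i j = g j i)
    (hdiag : ∀ i, g i i = 1)
    (hoff : ∀ i j, i ≠ j → g i j ≤ α)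
    (hlb : ∀ i j, -1 ≤ g i j)
    (hpsd : ∀ x : Fin n → ℝ, 0 ≤ ∑ i, ∑ j, x i * x j * g i j)
    (hrank : (n:ℝ)^2 ≤ r * ∑ i, ∑ j, (g i j)^2) :
    (n : ℝ) - 2 * r ≤ 27 / 8 * ((1 + α * n) ^ 3 - 1) := by
  set s : ℝ := α * n with hs_def
  have hs : 0 ≤ s := mul_nonneg hα0 (Nat.cast_nonneg n)
  set A : Fin n → Fin n → ℝ := fun i j => if i = j then 0 else g i j with hA_def
  have hA_symm : ∀ i j, A i j = A j i := by
    intro i j; simp only [hA_def]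
    by_cases h : i = j
    · simp [h]
    · simp [h, Ne.symm h, hsymm i j]
  have hA_le : ∀ i j, A i j ≤ α := by
    intro i j; simp only [hA_def]
    by_cases h : i = j
    · simp [h, hα0]
    · simpa [h] using hoff i j h
  have hA_lb : ∀ i j, -1 ≤ A i j := by
    intro i j; simp only [hA_def]
    by_cases h : i = j
    · norm_num [h]
    · simpa [h] using hlb i j
  have hG_eq : ∀ i j, g i j = A i j + (if i = j then (1:ℝ) else 0) := by
    intro i j; simp only [hA_def]
    by_cases h : i = j
    · simp [h, hdiag j]
    · simp [h]
  set P : Fin n → Fin n → ℝ := fun i j => max (A i j) 0 with hP_def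
  set N : Fin n → Fin n → ℝ := fun i j => max (-(A i j)) 0 with hN_def
  have hP0 : ∀ i j, 0 ≤ P i j := fun i j => le_max_right _ _
  have hN0 : ∀ i j, 0 ≤ N i j := fun i j => le_max_right _ _
  have hPle : ∀ i j, P i j ≤ α := fun i j => max_le (hA_le i j) hα0
  have hPN : ∀ i j, P i j - N i j = A i j := fun i j => pm_decomp _
  have hNsym : ∀ i j, N i j = N j i := by
    intro i j; simp only [hN_def, hA_symm i j]
  set X : ℝ := ∑ i, ∑ j, (P i j)^2 with hX_def
  have hX0 : 0 ≤ X := by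
    rw [hX_def]; positivity
  have hX : X ≤ s^2 := by
    rw [hX_def]
    have step1 : ∀ i j : Fin n, (P i j)^2 ≤ α * α := by
      intro i j
      have := hP0 i j; have := hPle i j
      nlinarith
    calc ∑ i, ∑ j, (P i j)^2 ≤ ∑ _i : Fin n, ∑ _j : Fin n, α * α :=
          Finset.sum_le_sum fun i _ => Finset.sum_le_sum fun j _ => step1 i j
      _ = s^2 := by
          simp only [Finset.sum_const, card_univ, Fintype.card_fin, nsmul_eq_mul, hs_def]
          ring
  set T2 : ℝ := ∑ i, ∑ j, (A i j)^2 with hT2_def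
  set Q : ℝ := ∑ i, ∑ j, g i j with hQ_def
  have hQ0 : 0 ≤ Q := by
    have := hpsd (fun _ => 1)
    simpa [hQ_def] using this
  have hT2g : ∑ i, ∑ j, (g i j)^2 = T2 + n := by
    have pt : ∀ i j : Fin n, (g i j)^2 = (A i j)^2 + (if i = j then (1:ℝ) else 0) := by
      intro i j
      by_cases h : i = j
      · subst h; simp [hA_def, hdiag i]
      · simp [hA_def, h]
    simp_rw [pt, Finset.sum_add_distrib, Finset.sum_ite_eq]
    simp [hT2_def]
  -- quadratic form bounds
  have hPquad : ∀ x : Fin n → ℝ,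
      |∑ i, ∑ j, x i * x j * P i j| ≤ s * ∑ i, (x i)^2 := by
    intro x
    have h1 := dcs (fun i j => x i * x j) P
    have h2 : ∑ i, ∑ j, (x i * x j)^2 = (∑ i, (x i)^2)^2 := by
      rw [sq (∑ i, (x i)^2), Finset.sum_mul_sum]
      exact Finset.sum_congr rfl fun i _ => Finset.sum_congr rfl fun j _ => by ring
    rw [h2] at h1
    have h3 : (∑ i, ∑ j, x i * x j * P i j)^2 ≤ (s * ∑ i, (x i)^2)^2 := by
      have hx2 : (0:ℝ) ≤ (∑ i, (x i)^2)^2 := sq_nonneg _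
      calc (∑ i, ∑ j, x i * x j * P i j)^2 ≤ (∑ i, (x i)^2)^2 * X := h1
        _ ≤ (∑ i, (x i)^2)^2 * s^2 := mul_le_mul_of_nonneg_left hX hx2
        _ = (s * ∑ i, (x i)^2)^2 := by ring
    have hsx : 0 ≤ s * ∑ i, (x i)^2 := mul_nonneg hs (by positivity)
    rw [abs_le]
    constructor <;> nlinarith [h3, hsx]
  have hBsym : ∀ x y : Fin n → ℝ,
      ∑ i, ∑ j, x i * y j * g i j = ∑ i, ∑ j, y i * x j * g i j := by
    intro x y
    rw [Finset.sum_comm]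
    exact Finset.sum_congr rfl fun i _ => Finset.sum_congr rfl fun j _ => by
      rw [hsymm j i]; ring
  have hbilin : ∀ x y : Fin n → ℝ,
      (∑ i, ∑ j, x i * y j * g i j)^2 ≤
        (∑ i, ∑ j, x i * x j * g i j) * (∑ i, ∑ j, y i * y j * g i j) := by
    intro x y
    set Bxx := ∑ i, ∑ j, x i * x j * g i j
    set Bxy := ∑ i, ∑ j, x i * y j * g i j
    set Byy := ∑ i, ∑ j, y i * y j * g i j
    have hq : ∀ t : ℝ, 0 ≤ Byy * (t * t) + (2 * Bxy) * t + Bxx := by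
      intro t
      have h0 := hpsd (fun i => x i + t * y i)
      have expand : ∑ i, ∑ j, (x i + t * y i) * (x j + t * y j) * g i j
          = Bxx + t * Bxy + t * (∑ i, ∑ j, y i * x j * g i j) + (t*t) * Byy := by
        have pt : ∀ i j, (x i + t * y i) * (x j + t * y j) * g i j
            = x i * x j * g i j + t * (x i * y j * g i j)
              + t * (y i * x j * g i j) + (t*t) * (y i * y j * g i j) := by
          intro i j; ring
        simp_rw [pt, Finset.sum_add_distrib, ← Finset.mul_sum]
        rfl
      rw [expand, ← hBsym x y] at h0
      linarith
    have hd := discrim_le_zero hq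
    rw [discrim] at hd
    nlinarith [hd]
  -- row sums
  set c : Fin n → ℝ := fun k => ∑ j, g k j with hc_def
  have hGquad : ∀ x : Fin n → ℝ,
      ∑ i, ∑ j, x i * x j * g i j ≤ (2 + 2*s) * ∑ i, (x i)^2 := by
    have esplit : ∀ y : Fin n → ℝ,
        ∑ i, ∑ j, y i * y j * g i j = (∑ i, ∑ j, y i * y j * A i j) + ∑ i, (y i)^2 := by
      intro y
      have pt : ∀ i j : Fin n, y i * y j * g i j
          = y i * y j * A i j + (if i = j then y i * y j else 0) := by
        intro i j
        rw [hG_eq i j]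
        by_cases h : i = j <;> simp [h] <;> ring
      simp_rw [pt, Finset.sum_add_distrib, Finset.sum_ite_eq]
      simp [sq]
    intro x
    have e1 := esplit x
    have e2 : ∑ i, ∑ j, x i * x j * A i j
        = (∑ i, ∑ j, x i * x j * P i j) - ∑ i, ∑ j, x i * x j * N i j := by
      simp_rw [← Finset.sum_sub_distrib]
      exact Finset.sum_congr rfl fun i _ => Finset.sum_congr rfl fun j _ => by
        rw [← hPN i j]; ring
    have e3 : -(∑ i, ∑ j, x i * x j * N i j) ≤ ∑ i, ∑ j, |x i| * |x j| * N i j := by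
      rw [← Finset.sum_neg_distrib]
      apply Finset.sum_le_sum
      intro i _
      rw [← Finset.sum_neg_distrib]
      apply Finset.sum_le_sum
      intro j _
      have h1 : |x i * x j * N i j| = |x i| * |x j| * N i j := by
        rw [abs_mul, abs_mul, abs_of_nonneg (hN0 i j)]
      calc -(x i * x j * N i j) ≤ |x i * x j * N i j| := neg_le_abs _
        _ = |x i| * |x j| * N i j := h1
    have e4 : ∑ i, ∑ j, |x i| * |x j| * N i j ≤ s * ∑ i, (x i)^2 + ∑ i, (x i)^2 := by
      have d1 : ∑ i, ∑ j, |x i| * |x j| * N i j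
          = (∑ i, ∑ j, |x i| * |x j| * P i j) - ∑ i, ∑ j, |x i| * |x j| * A i j := by
        simp_rw [← Finset.sum_sub_distrib]
        exact Finset.sum_congr rfl fun i _ => Finset.sum_congr rfl fun j _ => by
          rw [← hPN i j]; ring
      have d2 : 0 ≤ ∑ i, ∑ j, |x i| * |x j| * g i j := hpsd (fun i => |x i|)
      have d3 := esplit (fun i => |x i|)
      have d4 : ∑ i, (|x i|)^2 = ∑ i, (x i)^2 := by
        exact Finset.sum_congr rfl fun i _ => sq_abs _
      have d5 : ∑ i, ∑ j, |x i| * |x j| * P i j ≤ s * ∑ i, (x i)^2 := by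
        have := hPquad (fun i => |x i|)
        rw [d4] at this
        exact (le_abs_self _).trans this
      rw [d1]
      rw [d3, d4] at d2
      linarith
    have e5 : ∑ i, ∑ j, x i * x j * P i j ≤ s * ∑ i, (x i)^2 :=
      (le_abs_self _).trans (hPquad x)
    rw [e1, e2]
    linarith
  have hSc : ∑ k, (c k)^2 ≤ (2 + 2*s) * Q := by
    have hc1 : ∑ i, ∑ j, c i * (1:ℝ) * g i j = ∑ k, (c k)^2 := by
      refine Finset.sum_congr rfl fun i _ => ?_
      rw [sq, ← Finset.mul_sum]
      simp [hc_def]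
    have h11 : ∑ i, ∑ j, (1:ℝ) * (1:ℝ) * g i j = Q := by
      simp [hQ_def]
      rfl
    have hCS := hbilin c (fun _ => 1)
    rw [hc1, h11] at hCS
    have hBcc := hGquad c
    set S := ∑ k, (c k)^2 with hS_def
    have hS0 : 0 ≤ S := by rw [hS_def]; positivity
    rcases eq_or_lt_of_le hS0 with h | h
    · rw [← h]; positivity
    · nlinarith [hCS, hBcc, hQ0, hs, h]
  set L : Fin n → ℝ := fun k => ∑ j, N k j with hL_def
  set p : Fin n → ℝ := fun k => ∑ j, P k j with hp_def
  have hAG : ∀ k, ∑ j, A k j = c k - 1 := by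
    intro k
    have : c k = ∑ j, A k j + 1 := by
      rw [hc_def]
      simp_rw [hG_eq]
      rw [Finset.sum_add_distrib, Finset.sum_ite_eq]
      simp
    linarith
  have hLpc : ∀ k, L k = p k + (1 - c k) := by
    intro k
    have e : ∀ j : Fin n, N k j = P k j - A k j := fun j => by rw [← hPN k j]; ring
    rw [hL_def]
    simp_rw [e]
    rw [Finset.sum_sub_distrib, hAG k, hp_def]
    ring
  have hp_le : ∀ k, p k ≤ s := by
    intro k
    rw [hp_def]
    calc ∑ j, P k j ≤ ∑ _j : Fin n, α := Finset.sum_le_sum fun j _ => hPle k j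
      _ = s := by simp [hs_def, mul_comm]
  have hL0 : ∀ k, 0 ≤ L k := fun k => Finset.sum_nonneg fun j _ => hN0 k j
  have hsumL2 : ∑ k, (L k)^2 ≤ (n:ℝ) * (1+s)^2 := by
    have hLsq : ∀ k, (L k)^2 ≤ ((s+1) - c k)^2 := by
      intro k
      have h1 := hL0 k
      have h2 : L k ≤ (s+1) - c k := by rw [hLpc k]; linarith [hp_le k]
      nlinarith
    calc ∑ k, (L k)^2 ≤ ∑ k, ((s+1) - c k)^2 := Finset.sum_le_sum fun k _ => hLsq k
      _ = (n:ℝ) * (s+1)^2 - 2*(s+1)*Q + ∑ k, (c k)^2 := by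
          have pt : ∀ k, ((s+1) - c k)^2 = (s+1)^2 - 2*(s+1)*(c k) + (c k)^2 := by
            intro k; ring
          simp_rw [pt, Finset.sum_add_distrib, Finset.sum_sub_distrib, ← Finset.mul_sum]
          rw [Finset.sum_const, card_univ]
          have : ∑ k, c k = Q := by rw [hQ_def, hc_def]
          rw [this]
          simp [nsmul_eq_mul]
      _ ≤ (n:ℝ) * (s+1)^2 - 2*(s+1)*Q + (2+2*s)*Q := by linarith [hSc]
      _ = (n:ℝ) * (1+s)^2 := by ring
  set S3 : ℝ := ∑ i, ∑ j, ∑ k, A i j * A j k * A k i with hS3_def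
  have hS3upper : S3 ≤ s^3 + 3 * s * (1+s)^2 := by
    have hcube : ∀ i j k : Fin n, A i j * A j k * A k i
        ≤ P i j * P j k * P k i + P i j * N j k * N k i
          + N i j * P j k * N k i + N i j * N j k * P k i := by
      intro i j k
      simpa only [hP_def, hN_def] using cube_bound (A i j) (A j k) (A k i)
    have h1 : S3 ≤ (∑ i, ∑ j, ∑ k, P i j * P j k * P k i)
        + ((∑ i, ∑ j, ∑ k, P i j * N j k * N k i)
          + (∑ i, ∑ j, ∑ k, N i j * P j k * N k i)
          + (∑ i, ∑ j, ∑ k, N i j * N j k * P k i)) := by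
      rw [hS3_def]
      have := Finset.sum_le_sum (s := (univ : Finset (Fin n)))
        (fun i _ => Finset.sum_le_sum (s := (univ : Finset (Fin n)))
          (fun j _ => Finset.sum_le_sum (s := (univ : Finset (Fin n)))
            (fun k _ => hcube i j k)))
      calc ∑ i, ∑ j, ∑ k, A i j * A j k * A k i
          ≤ ∑ i, ∑ j, ∑ k, (P i j * P j k * P k i + P i j * N j k * N k i
              + N i j * P j k * N k i + N i j * N j k * P k i) := this
        _ = _ := by
            simp_rw [Finset.sum_add_distrib]
            ring
    -- PPP bound
    have hPPP : ∑ i, ∑ j, ∑ k, P i j * P j k * P k i ≤ s^3 := by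
      set W : Fin n → Fin n → ℝ := fun i j => ∑ k, P i k * P k j with hW_def
      have hPPPeq : ∑ i, ∑ j, ∑ k, P i j * P j k * P k i = ∑ i, ∑ j, P i j * W j i := by
        refine Finset.sum_congr rfl fun i _ => Finset.sum_congr rfl fun j _ => ?_
        rw [hW_def, Finset.mul_sum]
        exact Finset.sum_congr rfl fun k _ => by ring
      have hWsq : ∀ i j, (W i j)^2 ≤ (∑ k, (P i k)^2) * (∑ k, (P k j)^2) := by
        intro i j
        rw [hW_def]
        exact Finset.sum_mul_sq_le_sq_mul_sq univ _ _
      have hWX : ∑ i, ∑ j, (W j i)^2 ≤ X * X := by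
        rw [Finset.sum_comm]
        calc ∑ j, ∑ i, (W j i)^2
            ≤ ∑ j, ∑ i, (∑ k, (P j k)^2) * (∑ k, (P k i)^2) :=
              Finset.sum_le_sum fun j _ => Finset.sum_le_sum fun i _ => hWsq j i
          _ = (∑ j, ∑ k, (P j k)^2) * (∑ i, ∑ k, (P k i)^2) := by
              rw [Finset.sum_mul_sum]
          _ = X * X := by
              rw [hX_def, Finset.sum_comm (f := fun k i => (P k i)^2)]
      have h2 := dcs P (fun i j => W j i)
      have h3 : (∑ i, ∑ j, P i j * W j i)^2 ≤ X * (X * X) := by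
        calc (∑ i, ∑ j, P i j * W j i)^2 ≤ (∑ i, ∑ j, (P i j)^2) * (∑ i, ∑ j, (W j i)^2) := h2
          _ ≤ X * (X * X) := by
              rw [← hX_def]
              exact mul_le_mul_of_nonneg_left hWX hX0
      have h0 : 0 ≤ ∑ i, ∑ j, P i j * W j i := by
        apply Finset.sum_nonneg; intro i _
        apply Finset.sum_nonneg; intro j _
        exact mul_nonneg (hP0 i j) (Finset.sum_nonneg fun k _ => mul_nonneg (hP0 j k) (hP0 k i))
      rw [hPPPeq]
      have hX3 : X * (X * X) ≤ (s^3)^2 := by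
        have h6 : X^3 ≤ (s^2)^3 := pow_le_pow_left₀ hX0 hX 3
        calc X * (X * X) = X^3 := by ring
          _ ≤ (s^2)^3 := h6
          _ = (s^3)^2 := by ring
      have h7 : (∑ i, ∑ j, P i j * W j i)^2 ≤ (s^3)^2 := le_trans h3 hX3
      exact (pow_le_pow_iff_left₀ h0 (pow_nonneg hs 3) two_ne_zero).mp h7
    -- mixed terms
    have hsum2 : ∀ i : Fin n, ∑ k, (∑ j, N j k) * N k i = ∑ k, L k * N k i := by
      intro i
      refine Finset.sum_congr rfl fun k _ => ?_
      congr 1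
      rw [hL_def]
      exact Finset.sum_congr rfl fun j _ => hNsym j k
    have hPNN : ∑ i, ∑ j, ∑ k, P i j * N j k * N k i ≤ α * ∑ k, (L k)^2 := by
      have step1 : ∑ i, ∑ j, ∑ k, P i j * N j k * N k i
          ≤ ∑ i, ∑ j, ∑ k, α * (N j k * N k i) := by
        refine Finset.sum_le_sum fun i _ => Finset.sum_le_sum fun j _ =>
          Finset.sum_le_sum fun k _ => ?_
        have := mul_le_mul_of_nonneg_right (hPle i j)
          (mul_nonneg (hN0 j k) (hN0 k i))
        calc P i j * N j k * N k i = P i j * (N j k * N k i) := by ring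
          _ ≤ α * (N j k * N k i) := this
      have step2 : ∑ i, ∑ j, ∑ k, N j k * N k i = ∑ k, (L k)^2 := by
        calc ∑ i, ∑ j, ∑ k, N j k * N k i
            = ∑ i, ∑ k, ∑ j, N j k * N k i := Finset.sum_congr rfl fun i _ => Finset.sum_comm
          _ = ∑ i, ∑ k, (∑ j, N j k) * N k i := by
              refine Finset.sum_congr rfl fun i _ => Finset.sum_congr rfl fun k _ => ?_
              rw [Finset.sum_mul]
          _ = ∑ i, ∑ k, L k * N k i := Finset.sum_congr rfl fun i _ => hsum2 i
          _ = ∑ k, ∑ i, L k * N k i := Finset.sum_comm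
          _ = ∑ k, (L k)^2 := by
              refine Finset.sum_congr rfl fun k _ => ?_
              rw [← Finset.mul_sum, sq, hL_def]
      calc ∑ i, ∑ j, ∑ k, P i j * N j k * N k i
          ≤ ∑ i, ∑ j, ∑ k, α * (N j k * N k i) := step1
        _ = α * ∑ k, (L k)^2 := by
            rw [← step2]
            simp_rw [← Finset.mul_sum]
    have hNPN : ∑ i, ∑ j, ∑ k, N i j * P j k * N k i ≤ α * ∑ k, (L k)^2 := by
      have step1 : ∑ i, ∑ j, ∑ k, N i j * P j k * N k i
          ≤ ∑ i, ∑ j, ∑ k, α * (N i j * N k i) := by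
        refine Finset.sum_le_sum fun i _ => Finset.sum_le_sum fun j _ =>
          Finset.sum_le_sum fun k _ => ?_
        have := mul_le_mul_of_nonneg_right (hPle j k)
          (mul_nonneg (hN0 i j) (hN0 k i))
        calc N i j * P j k * N k i = P j k * (N i j * N k i) := by ring
          _ ≤ α * (N i j * N k i) := this
      have step2 : ∑ i, ∑ j, ∑ k, N i j * N k i = ∑ i, (L i)^2 := by
        refine Finset.sum_congr rfl fun i _ => ?_
        rw [← Finset.sum_mul_sum]
        have e1 : ∑ j, N i j = L i := by rw [hL_def]
        have e2 : ∑ k, N k i = L i := by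
          rw [hL_def]
          exact Finset.sum_congr rfl fun k _ => hNsym k i
        rw [e1, e2, sq]
      calc ∑ i, ∑ j, ∑ k, N i j * P j k * N k i
          ≤ ∑ i, ∑ j, ∑ k, α * (N i j * N k i) := step1
        _ = α * ∑ i, (L i)^2 := by
            rw [← step2]
            simp_rw [← Finset.mul_sum]
    have hNNP : ∑ i, ∑ j, ∑ k, N i j * N j k * P k i ≤ α * ∑ k, (L k)^2 := by
      have step1 : ∑ i, ∑ j, ∑ k, N i j * N j k * P k i
          ≤ ∑ i, ∑ j, ∑ k, α * (N i j * N j k) := by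
        refine Finset.sum_le_sum fun i _ => Finset.sum_le_sum fun j _ =>
          Finset.sum_le_sum fun k _ => ?_
        have := mul_le_mul_of_nonneg_right (hPle k i)
          (mul_nonneg (hN0 i j) (hN0 j k))
        calc N i j * N j k * P k i = P k i * (N i j * N j k) := by ring
          _ ≤ α * (N i j * N j k) := this
      have step2 : ∑ i, ∑ j, ∑ k, N i j * N j k = ∑ j, (L j)^2 := by
        calc ∑ i, ∑ j, ∑ k, N i j * N j k
            = ∑ i, ∑ j, N i j * ∑ k, N j k := by
              refine Finset.sum_congr rfl fun i _ => Finset.sum_congr rfl fun j _ => ?_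
              rw [Finset.mul_sum]
          _ = ∑ i, ∑ j, N i j * L j := rfl
          _ = ∑ j, ∑ i, N i j * L j := Finset.sum_comm
          _ = ∑ j, (L j)^2 := by
              refine Finset.sum_congr rfl fun j _ => ?_
              rw [← Finset.sum_mul, sq]
              congr 1
              rw [hL_def]
              exact Finset.sum_congr rfl fun i _ => hNsym i j
      calc ∑ i, ∑ j, ∑ k, N i j * N j k * P k i
          ≤ ∑ i, ∑ j, ∑ k, α * (N i j * N j k) := step1
        _ = α * ∑ j, (L j)^2 := by
            rw [← step2]
            simp_rw [← Finset.mul_sum]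
    have hαL : α * ∑ k, (L k)^2 ≤ s * (1+s)^2 := by
      calc α * ∑ k, (L k)^2 ≤ α * ((n:ℝ) * (1+s)^2) :=
            mul_le_mul_of_nonneg_left hsumL2 hα0
        _ = s * (1+s)^2 := by rw [hs_def]; ring
    calc S3 ≤ (∑ i, ∑ j, ∑ k, P i j * P j k * P k i)
        + ((∑ i, ∑ j, ∑ k, P i j * N j k * N k i)
          + (∑ i, ∑ j, ∑ k, N i j * P j k * N k i)
          + (∑ i, ∑ j, ∑ k, N i j * N j k * P k i)) := h1
      _ ≤ s^3 + (α * ∑ k, (L k)^2 + α * ∑ k, (L k)^2 + α * ∑ k, (L k)^2) := by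
          have := hPPP
          have := hPNN
          have := hNPN
          have := hNNP
          linarith
      _ ≤ s^3 + 3 * s * (1+s)^2 := by linarith [hαL]
  have hS3relabel : ∑ k, ∑ i, ∑ j, A k i * A k j * A i j = S3 := by
    have pt : ∀ k i j : Fin n, A k i * A k j * A i j = A i k * A k j * A j i := by
      intro k i j
      rw [hA_symm k i, hA_symm i j]
    rw [hS3_def]
    refine Eq.trans (Finset.sum_congr rfl fun k _ => Finset.sum_congr rfl fun i _ =>
      Finset.sum_congr rfl fun j _ => pt k i j) ?_
    exact Finset.sum_comm
  have ptA : ∀ k j : Fin n, A k j * g k j = (A k j)^2 := by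
    intro k j
    by_cases h : k = j
    · subst h; simp [hA_def]
    · rw [sq]; congr 1; simp [hA_def, h]
  have hkey : ∀ t : ℝ, 0 ≤ S3 + (1 - 2*t) * T2 + t^2 * n := by
    intro t
    have h0 : (0:ℝ) ≤ ∑ k, ∑ i, ∑ j,
        (A k i - t * (if k = i then (1:ℝ) else 0)) *
          (A k j - t * (if k = j then (1:ℝ) else 0)) * g i j :=
      Finset.sum_nonneg fun k _ => hpsd _
    have pt : ∀ k i j : Fin n,
        (A k i - t * (if k = i then (1:ℝ) else 0)) *
          (A k j - t * (if k = j then (1:ℝ) else 0)) * g i j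
        = A k i * A k j * g i j
          - (if k = i then t * (A k j * g i j) else 0)
          - (if k = j then t * (A k i * g i j) else 0)
          + (if k = i then (if k = j then t^2 * g i j else 0) else 0) := by
      intro k i j
      by_cases h1 : k = i <;> by_cases h2 : k = j <;> simp only [h1, h2, if_true, if_false,
        if_pos, if_neg] <;> ring_nf <;> simp [h1, h2] <;> ring
    simp_rw [pt, Finset.sum_add_distrib, Finset.sum_sub_distrib] at h0
    have hE1 : ∑ k, ∑ i, ∑ j, A k i * A k j * g i j = S3 + T2 := by
      have pt1 : ∀ k i j : Fin n, A k i * A k j * g i j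
          = A k i * A k j * A i j + (if i = j then A k i * A k j else 0) := by
        intro k i j
        rw [hG_eq i j]
        by_cases h : i = j <;> simp [h] <;> ring
      simp_rw [pt1, Finset.sum_add_distrib, Finset.sum_ite_eq]
      rw [hS3relabel]
      simp [hT2_def, sq]
    have hE2 : ∑ k, ∑ i, ∑ j, (if k = i then t * (A k j * g i j) else 0) = t * T2 := by
      have e1 : ∀ k : Fin n, ∑ i, ∑ j, (if k = i then t * (A k j * g i j) else 0)
          = ∑ j, t * (A k j * g k j) := by
        intro k
        rw [Finset.sum_comm]
        refine Finset.sum_congr rfl fun j _ => ?_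
        exact Fintype.sum_ite_eq k (fun i => t * (A k j * g i j))
      simp_rw [e1, ptA]
      rw [hT2_def, Finset.mul_sum]
      exact Finset.sum_congr rfl fun k _ => by rw [Finset.mul_sum]
    have hE3 : ∑ k, ∑ i, ∑ j, (if k = j then t * (A k i * g i j) else 0) = t * T2 := by
      have e1 : ∀ k i : Fin n, ∑ j, (if k = j then t * (A k i * g i j) else 0)
          = t * (A k i * g i k) := fun k i => Fintype.sum_ite_eq k (fun j => t * (A k i * g i j))
      simp_rw [e1]
      have e2 : ∀ k i : Fin n, t * (A k i * g i k) = t * (A k i)^2 := by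
        intro k i
        rw [hsymm i k, ptA k i]
      simp_rw [e2]
      rw [hT2_def, Finset.mul_sum]
      exact Finset.sum_congr rfl fun k _ => by rw [Finset.mul_sum]
    have hE4 : ∑ k, ∑ i, ∑ j, (if k = i then (if k = j then t^2 * g i j else 0) else 0)
        = t^2 * n := by
      have swap_ite : ∀ k i j : Fin n,
          (if k = i then (if k = j then t^2 * g i j else 0) else 0)
          = (if k = j then (if k = i then t^2 * g i j else 0) else 0) := by
        intro k i j
        by_cases h1 : k = i <;> by_cases h2 : k = j <;> simp [h1, h2]
      have e1 : ∀ k i : Fin n, ∑ j, (if k = j then (if k = i then t^2 * g i j else 0) else 0)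
          = (if k = i then t^2 * g i k else 0) :=
        fun k i => Fintype.sum_ite_eq k (fun j => if k = i then t^2 * g i j else 0)
      have e2 : ∀ k : Fin n, ∑ i, (if k = i then t^2 * g i k else 0) = t^2 * g k k :=
        fun k => Fintype.sum_ite_eq k (fun i => t^2 * g i k)
      calc ∑ k, ∑ i, ∑ j, (if k = i then (if k = j then t^2 * g i j else 0) else 0)
          = ∑ k, ∑ i, ∑ j, (if k = j then (if k = i then t^2 * g i j else 0) else 0) :=
            Finset.sum_congr rfl fun k _ => Finset.sum_congr rfl fun i _ =>
              Finset.sum_congr rfl fun j _ => swap_ite k i j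
        _ = ∑ k, ∑ i, (if k = i then t^2 * g i k else 0) :=
            Finset.sum_congr rfl fun k _ => Finset.sum_congr rfl fun i _ => e1 k i
        _ = ∑ k, t^2 * g k k := Finset.sum_congr rfl fun k _ => e2 k
        _ = ∑ _k : Fin n, t^2 := Finset.sum_congr rfl fun k _ => by rw [hdiag k, mul_one]
        _ = t^2 * n := by
            rw [Finset.sum_const, card_univ, Fintype.card_fin, nsmul_eq_mul]
            ring
    rw [hE1, hE2, hE3, hE4] at h0
    linarith
  -- endgame
  have hrr : (0:ℝ) < r := by exact_mod_cast hr
  have hnn : 2 * (r:ℝ) < n := by exact_mod_cast hn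
  set t0 : ℝ := ((n:ℝ) - r) / r with ht0_def
  have ht0r : t0 * r = (n:ℝ) - r := div_mul_cancel₀ _ (ne_of_gt hrr)
  have ht0gt : 1 < t0 := by
    rw [ht0_def, lt_div_iff₀ hrr]; linarith
  have hT2ge : (n:ℝ) * t0 ≤ T2 := by
    have h1 : (n:ℝ)^2 ≤ r * (T2 + n) := by rw [← hT2g]; exact hrank
    have h2 : (n:ℝ) * ((n:ℝ) - r) ≤ T2 * r := by nlinarith
    rw [ht0_def, mul_div_assoc' (n:ℝ) _ (r:ℝ)]
    rw [div_le_iff₀ hrr]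
    linarith
  have hfinal : 2 * ((n:ℝ) - 2*r) ≤ S3 := by
    have hk := hkey t0
    have h1 : (2*t0 - 1) * ((n:ℝ)*t0) ≤ (2*t0-1) * T2 :=
      mul_le_mul_of_nonneg_left hT2ge (by linarith)
    have h2 : (n:ℝ) * t0 * (t0 - 1) ≤ S3 := by nlinarith
    have h3 : 2 * (r:ℝ) ≤ (n:ℝ) * t0 := by
      nlinarith [ht0r, hrr, hnn]
    have h5 : (0:ℝ) ≤ t0 - 1 := by linarith
    have h6 : (t0 - 1) * r = (n:ℝ) - 2*r := by
      rw [sub_mul, ht0r]; ring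
    nlinarith [mul_le_mul_of_nonneg_right h3 h5, h2, h6, hrr]
  nlinarith [hs, hS3upper, hfinal, pow_nonneg hs 3, sq_nonneg s, mul_nonneg hs hs,
    mul_nonneg (mul_nonneg hs hs) hs]

theorem spherical_code_size_bound (n r : ℕ) (hr : 0 < r) (hn : 2 * r < n)
    (α : ℝ) (hα0 : 0 ≤ α) (hα1 : α < 1)
    (v : Fin n → EuclideanSpace ℝ (Fin r))
    (hunit : ∀ i, ‖v i‖ = 1)
    (hpair : ∀ i j, i ≠ j → (inner ℝ (v i) (v j) : ℝ) ≤ α) :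
    (n : ℝ) - 2 * r ≤ 27 / 8 * ((1 + α * n) ^ 3 - 1) := by
  set g : Fin n → Fin n → ℝ := fun i j => (inner ℝ (v i) (v j) : ℝ) with hg_def
  have hsymm : ∀ i j, g i j = g j i := fun i j => real_inner_comm _ _
  have hdiag : ∀ i, g i i = 1 := by
    intro i; simp only [hg_def, real_inner_self_eq_norm_mul_norm, hunit i, mul_one]
  have hlb : ∀ i j, -1 ≤ g i j := by
    intro i j
    have h := abs_real_inner_le_norm (v i) (v j)
    rw [hunit i, hunit j, one_mul] at h
    have := (abs_le.mp h).1
    simpa [hg_def] using this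
  have hpsd : ∀ x : Fin n → ℝ, 0 ≤ ∑ i, ∑ j, x i * x j * g i j := by
    intro x
    have he : ∑ i, ∑ j, x i * x j * g i j
        = (inner ℝ (∑ i, x i • v i) (∑ j, x j • v j) : ℝ) := by
      rw [sum_inner]
      refine Finset.sum_congr rfl fun i _ => ?_
      rw [real_inner_smul_left, inner_sum, Finset.mul_sum]
      refine Finset.sum_congr rfl fun j _ => ?_
      rw [real_inner_smul_right]; ring
    rw [he]; exact real_inner_self_nonneg
  have hgcoord : ∀ i j, g i j = ∑ a, v i a * v j a := by
    intro i j
    simp only [hg_def, PiLp.inner_apply, RCLike.inner_apply, conj_trivial]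
    exact Finset.sum_congr rfl fun a _ => mul_comm _ _
  have hrank : (n:ℝ)^2 ≤ r * ∑ i, ∑ j, (g i j)^2 := by
    set C : Fin r → Fin r → ℝ := fun a b => ∑ i, v i a * v i b with hC_def
    have h1 : ∑ a, C a a = n := by
      calc ∑ a, C a a = ∑ a, ∑ i, v i a * v i a := rfl
        _ = ∑ i, ∑ a, v i a * v i a := Finset.sum_comm
        _ = ∑ _i : Fin n, (1:ℝ) := by
            refine Finset.sum_congr rfl fun i _ => ?_
            rw [← hgcoord i i, hdiag i]
        _ = n := by simp
    have h2 : ((n:ℝ))^2 ≤ r * ∑ a, (C a a)^2 := by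
      have h := sq_sum_le_card_mul_sum_sq (s := (univ : Finset (Fin r))) (f := fun a => C a a)
      rw [h1] at h
      simpa using h
    have h3 : ∑ a, (C a a)^2 ≤ ∑ a, ∑ b, (C a b)^2 :=
      Finset.sum_le_sum fun a _ =>
        Finset.single_le_sum (f := fun b => (C a b)^2) (fun b _ => sq_nonneg _) (mem_univ a)
    have h4 : ∑ a, ∑ b, (C a b)^2 = ∑ i, ∑ j, (g i j)^2 := by
      have e1 : ∀ a b, (C a b)^2 = ∑ i, ∑ j, (v i a * v i b) * (v j a * v j b) := by
        intro a b
        rw [sq, hC_def]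
        exact Finset.sum_mul_sum _ _ _ _
      have e2 : ∀ i j, (g i j)^2 = ∑ a, ∑ b, (v i a * v i b) * (v j a * v j b) := by
        intro i j
        rw [sq, hgcoord i j, Finset.sum_mul_sum]
        refine Finset.sum_congr rfl fun a _ => Finset.sum_congr rfl fun b _ => by ring
      simp_rw [e1, e2]
      exact sum4_swap _
    calc ((n:ℝ))^2 ≤ r * ∑ a, (C a a)^2 := h2
      _ ≤ r * ∑ a, ∑ b, (C a b)^2 := by
          apply mul_le_mul_of_nonneg_left h3 (Nat.cast_nonneg r)
      _ = r * ∑ i, ∑ j, (g i j)^2 := by rw [h4]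
  exact spherical_abstract_main n r hr hn α hα0 g hsymm hdiag hpair hlb hpsd hrank
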